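/- Consider the financial system on banks {1,…,8} with external assets e 2 = e 7 = 1/2 and e i = 0 for all other i, debt contracts of notional 1: 2→3, 3→4, 6→5, 7→6, and two CDSes of notional 1: one with debtor 2, creditor 1, reference bank 6, and one with debtor 7, creditor 8, reference bank 3 (all other notionals are 0). Then this system has exactly one clearing vector r, and it satisfies r 2 = r 3 = r 6 = r 7 = 1 − √2/2 and r 1 = r 4 = r 5 = r 8 = 1; in particular r 2 is irrational. -/

import Mathlib

open Finset

/-- The liability of bank `i` to bank `j` under recovery-rate vector `r`. -/
def liab {n : ℕ} (c : Fin n → Fin n → ℝ) (cds : Fin n → Fin n → Fin n → ℝ)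
    (r : Fin n → ℝ) (i j : Fin n) : ℝ :=
  c i j + ∑ R : Fin n, (1 - r R) * cds i j R

/-- The total liability of bank `i` under recovery-rate vector `r`. -/
def totLiab {n : ℕ} (c : Fin n → Fin n → ℝ) (cds : Fin n → Fin n → Fin n → ℝ)
    (r : Fin n → ℝ) (i : Fin n) : ℝ :=
  ∑ j : Fin n, liab c cds r i j

/-- The assets of bank `i` under recovery-rate vector `r`
(external assets plus incoming payments `p j i r = r j * liab c cds r j i`). -/
def assets {n : ℕ} (e : Fin n → ℝ) (c : Fin n → Fin n → ℝ)
    (cds : Fin n → Fin n → Fin n → ℝ) (r : Fin n → ℝ) (i : Fin n) : ℝ :=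
  e i + ∑ j : Fin n, r j * liab c cds r j i

/-- `r` is a clearing recovery-rate vector. -/
def IsClearing {n : ℕ} (e : Fin n → ℝ) (c : Fin n → Fin n → ℝ)
    (cds : Fin n → Fin n → Fin n → ℝ) (r : Fin n → ℝ) : Prop :=
  (∀ i, 0 ≤ r i ∧ r i ≤ 1) ∧
  ∀ i, (0 < totLiab c cds r i →
          r i = min 1 (assets e c cds r i / totLiab c cds r i)) ∧
       (totLiab c cds r i = 0 → r i = 1)

/-- `(e, c, cds)` is a financial system. -/
def IsFinSys {n : ℕ} (e : Fin n → ℝ) (c : Fin n → Fin n → ℝ)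
    (cds : Fin n → Fin n → Fin n → ℝ) : Prop :=
  (∀ i, 0 ≤ e i) ∧ (∀ i j, 0 ≤ c i j) ∧ (∀ i, c i i = 0) ∧
  (∀ i j R, 0 ≤ cds i j R) ∧
  (∀ i j R, ¬(i ≠ j ∧ i ≠ R ∧ j ≠ R) → cds i j R = 0)

/-- External assets of the 8-bank example (banks 1..8 are indices 0..7):
banks 2 and 7 hold 1/2. -/
noncomputable def eEx : Fin 8 → ℝ := fun i => if i = 1 ∨ i = 6 then 1/2 else 0

/-- Debt contracts of the 8-bank example: 2→3, 3→4, 6→5, 7→6, each of notional 1. -/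
noncomputable def cEx : Fin 8 → Fin 8 → ℝ := fun i j =>
  if (i = 1 ∧ j = 2) ∨ (i = 2 ∧ j = 3) ∨ (i = 5 ∧ j = 4) ∨ (i = 6 ∧ j = 5) then 1 else 0

/-- CDSes of the 8-bank example: (debtor 2, creditor 1, reference 6) and
(debtor 7, creditor 8, reference 3), each of notional 1. -/
noncomputable def cdsEx : Fin 8 → Fin 8 → Fin 8 → ℝ := fun i j R =>
  if (i = 1 ∧ j = 0 ∧ R = 5) ∨ (i = 6 ∧ j = 7 ∧ R = 2) then 1 else 0

noncomputable def rEx : Fin 8 → ℝ := fun i =>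
  if i = 1 ∨ i = 2 ∨ i = 5 ∨ i = 6 then 1 - Real.sqrt 2 / 2 else 1

lemma totLiab_eq (r : Fin 8 → ℝ) :
    totLiab cEx cdsEx r 0 = 0 ∧ totLiab cEx cdsEx r 1 = 2 - r 5 ∧
    totLiab cEx cdsEx r 2 = 1 ∧ totLiab cEx cdsEx r 3 = 0 ∧
    totLiab cEx cdsEx r 4 = 0 ∧ totLiab cEx cdsEx r 5 = 1 ∧
    totLiab cEx cdsEx r 6 = 2 - r 2 ∧ totLiab cEx cdsEx r 7 = 0 := by
  refine ⟨?_,?_,?_,?_,?_,?_,?_,?_⟩ <;>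
    simp [totLiab, liab, cEx, cdsEx, Fin.sum_univ_eight] <;> ring

lemma assets_eq (r : Fin 8 → ℝ) :
    assets eEx cEx cdsEx r 1 = 1/2 ∧ assets eEx cEx cdsEx r 2 = r 1 ∧
    assets eEx cEx cdsEx r 5 = r 6 ∧ assets eEx cEx cdsEx r 6 = 1/2 := by
  refine ⟨?_,?_,?_,?_⟩ <;> simp [assets, liab, eEx, cEx, cdsEx, Fin.sum_univ_eight]

lemma sqrt2_sq : Real.sqrt 2 ^ 2 = 2 := Real.sq_sqrt (by norm_num)
lemma sqrt2_ge : (1:ℝ) ≤ Real.sqrt 2 := by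
  nlinarith [Real.sqrt_nonneg 2, sqrt2_sq]
lemma sqrt2_le : Real.sqrt 2 ≤ 3/2 := by
  nlinarith [Real.sqrt_nonneg 2, sqrt2_sq]

lemma clearing_unique (r : Fin 8 → ℝ) (h : IsClearing eEx cEx cdsEx r) :
    r 1 = 1 - Real.sqrt 2 / 2 ∧ r 2 = 1 - Real.sqrt 2 / 2 ∧
    r 5 = 1 - Real.sqrt 2 / 2 ∧ r 6 = 1 - Real.sqrt 2 / 2 ∧
    r 0 = 1 ∧ r 3 = 1 ∧ r 4 = 1 ∧ r 7 = 1 := by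
  obtain ⟨hb, hc⟩ := h
  obtain ⟨L0, L1, L2, L3, L4, L5, L6, L7⟩ := totLiab_eq r
  obtain ⟨A1, A2, A5, A6⟩ := assets_eq r
  have h0 : r 0 = 1 := (hc 0).2 L0
  have h3 : r 3 = 1 := (hc 3).2 L3
  have h4 : r 4 = 1 := (hc 4).2 L4
  have h7 : r 7 = 1 := (hc 7).2 L7
  have hr1 := hb 1; have hr2 := hb 2; have hr5 := hb 5; have hr6 := hb 6
  have h2 : r 2 = r 1 := by
    have := (hc 2).1 (by rw [L2]; norm_num)
    rw [L2, A2] at this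
    rw [this, div_one, min_eq_right hr1.2]
  have h5 : r 5 = r 6 := by
    have := (hc 5).1 (by rw [L5]; norm_num)
    rw [L5, A5] at this
    rw [this, div_one, min_eq_right hr6.2]
  have hd1 : (0:ℝ) < 2 - r 5 := by linarith [hr5.2]
  have hd6 : (0:ℝ) < 2 - r 2 := by linarith [hr2.2]
  have e1 : r 1 * (2 - r 5) = 1/2 := by
    have := (hc 1).1 (by rw [L1]; exact hd1)
    rw [L1, A1] at this
    have hle : (1:ℝ)/2 / (2 - r 5) ≤ 1/2 := by
      rw [div_le_iff₀ hd1]; nlinarith [hr5.2]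
    rw [min_eq_right (by linarith)] at this
    rw [this]; field_simp
  have e6 : r 6 * (2 - r 2) = 1/2 := by
    have := (hc 6).1 (by rw [L6]; exact hd6)
    rw [L6, A6] at this
    have hle : (1:ℝ)/2 / (2 - r 2) ≤ 1/2 := by
      rw [div_le_iff₀ hd6]; nlinarith [hr2.2]
    rw [min_eq_right (by linarith)] at this
    rw [this]; field_simp
  -- x = r 1 = r 2, y = r 5 = r 6, and x = y
  have e1' : r 1 * (2 - r 6) = 1/2 := by rw [h5] at e1; exact e1
  have e6' : r 6 * (2 - r 1) = 1/2 := by rw [h2] at e6; exact e6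
  have hxy : r 1 = r 6 := by linear_combination (1/2 : ℝ) * e1' - (1/2 : ℝ) * e6'
  have hx : r 1 = 1 - Real.sqrt 2 / 2 := by
    have hq : r 1 * (2 - r 1) = 1/2 := by rw [← hxy] at e1'; exact e1'
    have hfac : (r 1 - (1 - Real.sqrt 2 / 2)) * (r 1 - (1 + Real.sqrt 2 / 2)) = 0 := by
      linear_combination -hq - (1/4 : ℝ) * sqrt2_sq
    rcases mul_eq_zero.1 hfac with hf | hf
    · linarith
    · exfalso; nlinarith [hr1.2, sqrt2_ge]
  exact ⟨hx, by rw [h2, hx], by rw [h5, ← hxy, hx], by rw [← hxy, hx], h0, h3, h4, h7⟩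

lemma rEx_vals : rEx 0 = 1 ∧ rEx 1 = 1 - Real.sqrt 2 / 2 ∧ rEx 2 = 1 - Real.sqrt 2 / 2 ∧
    rEx 3 = 1 ∧ rEx 4 = 1 ∧ rEx 5 = 1 - Real.sqrt 2 / 2 ∧
    rEx 6 = 1 - Real.sqrt 2 / 2 ∧ rEx 7 = 1 := by
  refine ⟨?_,?_,?_,?_,?_,?_,?_,?_⟩ <;> simp [rEx]

set_option maxHeartbeats 1000000 in
lemma clearing_rEx : IsClearing eEx cEx cdsEx rEx := by
  obtain ⟨v0, v1, v2, v3, v4, v5, v6, v7⟩ := rEx_vals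
  obtain ⟨L0, L1, L2, L3, L4, L5, L6, L7⟩ := totLiab_eq rEx
  obtain ⟨A1, A2, A5, A6⟩ := assets_eq rEx
  have hs := sqrt2_sq; have hg := sqrt2_ge; have hl := sqrt2_le
  have ht0 : (0:ℝ) ≤ 1 - Real.sqrt 2 / 2 := by linarith
  have ht1 : (1:ℝ) - Real.sqrt 2 / 2 ≤ 1 := by linarith
  constructor
  · intro i
    unfold rEx
    split <;> constructor <;> linarith
  · have c0 : (0 < totLiab cEx cdsEx rEx 0 →
        rEx 0 = min 1 (assets eEx cEx cdsEx rEx 0 / totLiab cEx cdsEx rEx 0)) ∧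
        (totLiab cEx cdsEx rEx 0 = 0 → rEx 0 = 1) :=
      ⟨fun hp => absurd hp (by rw [L0]; norm_num), fun _ => v0⟩
    have c3 : (0 < totLiab cEx cdsEx rEx 3 →
        rEx 3 = min 1 (assets eEx cEx cdsEx rEx 3 / totLiab cEx cdsEx rEx 3)) ∧
        (totLiab cEx cdsEx rEx 3 = 0 → rEx 3 = 1) :=
      ⟨fun hp => absurd hp (by rw [L3]; norm_num), fun _ => v3⟩
    have c4 : (0 < totLiab cEx cdsEx rEx 4 →
        rEx 4 = min 1 (assets eEx cEx cdsEx rEx 4 / totLiab cEx cdsEx rEx 4)) ∧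
        (totLiab cEx cdsEx rEx 4 = 0 → rEx 4 = 1) :=
      ⟨fun hp => absurd hp (by rw [L4]; norm_num), fun _ => v4⟩
    have c7 : (0 < totLiab cEx cdsEx rEx 7 →
        rEx 7 = min 1 (assets eEx cEx cdsEx rEx 7 / totLiab cEx cdsEx rEx 7)) ∧
        (totLiab cEx cdsEx rEx 7 = 0 → rEx 7 = 1) :=
      ⟨fun hp => absurd hp (by rw [L7]; norm_num), fun _ => v7⟩
    have c1 : (0 < totLiab cEx cdsEx rEx 1 →
        rEx 1 = min 1 (assets eEx cEx cdsEx rEx 1 / totLiab cEx cdsEx rEx 1)) ∧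
        (totLiab cEx cdsEx rEx 1 = 0 → rEx 1 = 1) := by
      constructor
      · intro _
        rw [L1, A1, v1, v5, min_eq_right]
        · rw [eq_div_iff (by linarith)]; nlinarith
        · rw [div_le_one (by linarith)]; linarith
      · intro hz; rw [L1, v5] at hz; exfalso; linarith
    have c2 : (0 < totLiab cEx cdsEx rEx 2 →
        rEx 2 = min 1 (assets eEx cEx cdsEx rEx 2 / totLiab cEx cdsEx rEx 2)) ∧
        (totLiab cEx cdsEx rEx 2 = 0 → rEx 2 = 1) := by
      constructor
      · intro _; rw [L2, A2, v2, v1, div_one, min_eq_right ht1]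
      · intro hz; rw [L2] at hz; exfalso; linarith
    have c5 : (0 < totLiab cEx cdsEx rEx 5 →
        rEx 5 = min 1 (assets eEx cEx cdsEx rEx 5 / totLiab cEx cdsEx rEx 5)) ∧
        (totLiab cEx cdsEx rEx 5 = 0 → rEx 5 = 1) := by
      constructor
      · intro _; rw [L5, A5, v5, v6, div_one, min_eq_right ht1]
      · intro hz; rw [L5] at hz; exfalso; linarith
    have c6 : (0 < totLiab cEx cdsEx rEx 6 →
        rEx 6 = min 1 (assets eEx cEx cdsEx rEx 6 / totLiab cEx cdsEx rEx 6)) ∧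
        (totLiab cEx cdsEx rEx 6 = 0 → rEx 6 = 1) := by
      constructor
      · intro _
        rw [L6, A6, v6, v2, min_eq_right]
        · rw [eq_div_iff (by linarith)]; nlinarith
        · rw [div_le_one (by linarith)]; linarith
      · intro hz; rw [L6, v2] at hz; exfalso; linarith
    intro i
    fin_cases i
    exacts [c0, c1, c2, c3, c4, c5, c6, c7]

lemma irr_t : Irrational (1 - Real.sqrt 2 / 2) := by
  have h1 : Irrational (Real.sqrt 2 / 2) := by
    simpa using irrational_sqrt_two.div_natCast (m := 2) (by norm_num)
  simpa using h1.ratCast_sub 1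

/-- The 8-bank example has exactly one clearing vector; it has
`r 2 = r 3 = r 6 = r 7 = 1 - √2/2` (irrational) and `r 1 = r 4 = r 5 = r 8 = 1`. -/
theorem eight_bank_irrational_clearing :
    (∃! r : Fin 8 → ℝ, IsClearing eEx cEx cdsEx r) ∧
    ∀ r : Fin 8 → ℝ, IsClearing eEx cEx cdsEx r →
      r 1 = 1 - Real.sqrt 2 / 2 ∧ r 2 = 1 - Real.sqrt 2 / 2 ∧
      r 5 = 1 - Real.sqrt 2 / 2 ∧ r 6 = 1 - Real.sqrt 2 / 2 ∧
      r 0 = 1 ∧ r 3 = 1 ∧ r 4 = 1 ∧ r 7 = 1 ∧ Irrational (r 1) := by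
  have key := clearing_unique
  refine ⟨⟨rEx, clearing_rEx, fun r hr => ?_⟩, fun r hr => ?_⟩
  · obtain ⟨h1, h2, h5, h6, h0, h3, h4, h7⟩ := key r hr
    obtain ⟨v0, v1, v2, v3, v4, v5, v6, v7⟩ := rEx_vals
    funext i; fin_cases i <;> simp_all
  · obtain ⟨h1, h2, h5, h6, h0, h3, h4, h7⟩ := key r hr
    exact ⟨h1, h2, h5, h6, h0, h3, h4, h7, h1 ▸ irr_t⟩
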